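/- Let F ∈ F_q^{M×n} and G ∈ F_q^{N×n} satisfy rank([F; G]) = rank(F) + N. Then there exists a matrix P ∈ F_q^{n×N} such that F·P = 0 and rank(G·P) = N. -/
import Mathlib


/-- Existence of an encoding matrix: if rank([F;G]) = rank(F) + N, then there is
`P` with `F * P = 0` and `rank (G * P) = N`. -/
theorem exists_encoding_matrix
    {𝔽 : Type*} [Field 𝔽] [Fintype 𝔽] {M N n : ℕ}
    (F : Matrix (Fin M) (Fin n) 𝔽) (G : Matrix (Fin N) (Fin n) 𝔽)
    (h : (Matrix.fromRows F G).rank = F.rank + N) :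
    ∃ P : Matrix (Fin n) (Fin N) 𝔽, F * P = 0 ∧ (G * P).rank = N := by
  classical
  set KF := LinearMap.ker F.mulVecLin with hKF
  set KG := LinearMap.ker G.mulVecLin with hKG
  -- kernel of fromRows is the intersection
  have hker : LinearMap.ker (Matrix.fromRows F G).mulVecLin = KF ⊓ KG := by
    ext x
    simp only [LinearMap.mem_ker, Matrix.mulVecLin_apply, Submodule.mem_inf, hKF, hKG,
      Matrix.fromRows_mulVec]
    constructor
    · intro hx
      refine ⟨funext fun i => ?_, funext fun i => ?_⟩
      · simpa using congrFun hx (Sum.inl i)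
      · simpa using congrFun hx (Sum.inr i)
    · rintro ⟨h1, h2⟩
      funext i
      cases i <;> simp [h1, h2]
  -- rank-nullity counts
  have hrn1 : (Matrix.fromRows F G).rank
      + Module.finrank 𝔽 (KF ⊓ KG : Submodule 𝔽 (Fin n → 𝔽)) = n := by
    rw [Matrix.rank, ← hker, LinearMap.finrank_range_add_finrank_ker]
    simp [Module.finrank_pi]
  have hrn2 : F.rank + Module.finrank 𝔽 KF = n := by
    rw [Matrix.rank, hKF, LinearMap.finrank_range_add_finrank_ker]
    simp [Module.finrank_pi]
  have hdim : Module.finrank 𝔽 KF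
      = Module.finrank 𝔽 (KF ⊓ KG : Submodule 𝔽 (Fin n → 𝔽)) + N := by
    omega
  -- the restriction of G to KF
  let L : KF →ₗ[𝔽] (Fin N → 𝔽) := G.mulVecLin.domRestrict KF
  have hkerL : LinearMap.ker L = (KF ⊓ KG).comap KF.subtype := by
    ext ⟨x, hx⟩
    simp [L, LinearMap.domRestrict, hKG, hx]
  have hfinkerL : Module.finrank 𝔽 (LinearMap.ker L)
      = Module.finrank 𝔽 (KF ⊓ KG : Submodule 𝔽 (Fin n → 𝔽)) := by
    rw [hkerL]
    exact LinearEquiv.finrank_eq (Submodule.comapSubtypeEquivOfLe inf_le_left)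
  have hrangeL : Module.finrank 𝔽 (LinearMap.range L) = N := by
    have := LinearMap.finrank_range_add_finrank_ker L
    rw [hfinkerL] at this
    omega
  have hsurj : Function.Surjective L := by
    rw [← LinearMap.range_eq_top]
    apply Submodule.eq_top_of_finrank_eq
    simp [hrangeL, Module.finrank_pi]
  -- choose preimages of the standard basis
  choose p hp using fun i : Fin N => hsurj (Pi.single i 1)
  refine ⟨Matrix.of fun j i => (p i : Fin n → 𝔽) j, ?_, ?_⟩
  · ext k i
    have : F.mulVec (p i : Fin n → 𝔽) = 0 := (p i).2
    have := congrFun this k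
    simpa [Matrix.mul_apply, Matrix.mulVec, dotProduct] using this
  · have hGP : G * Matrix.of (fun j i => (p i : Fin n → 𝔽) j) = 1 := by
      ext k i
      have : G.mulVec (p i : Fin n → 𝔽) = Pi.single i 1 := hp i
      have := congrFun this k
      simp only [Matrix.mulVec, dotProduct] at this
      simp only [Matrix.mul_apply, Matrix.of_apply, this, Matrix.one_apply]
      by_cases hik : k = i <;> simp [Pi.single_apply, hik, eq_comm]
    rw [hGP, Matrix.rank_one, Fintype.card_fin]
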